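/- Let (L,v) be a Henselian valued field of equicharacteristic 0 and (K,v) ⊆ (L,v) a valued subfield with the same residue field k_K = k_L. If γ ∈ Γ_L satisfies n·γ ∈ Γ_K = v(K^×) for some n ≥ 1, then there exists a ∈ L with aⁿ ∈ K and v(a) = γ. -/

import Mathlib

private lemma wt_sub_self {Γ : Type*} [AddCommGroup Γ] [LinearOrder Γ] [IsOrderedAddMonoid Γ] (a : WithTop Γ)
    (h : a ≠ ⊤) : a - a = 0 := by
  lift a to Γ using h
  rw [sub_eq_add_neg, show -(a : WithTop Γ) = ((-a : Γ) : WithTop Γ) from rfl,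
    ← WithTop.coe_add, add_neg_cancel, WithTop.coe_zero]


/-- Let `(L,v)` be a Henselian valued field of equicharacteristic `0` and `K ⊆ L` a
valued subfield with the same residue field (every unit of `O_L` is congruent mod `m_L`
to an element of `K`). If `γ ∈ Γ_L` (given as `γ = v(c)`, `c ∈ L^×`) satisfies
`n·γ ∈ Γ_K = v(K^×)` for some `n ≥ 1`, then there exists `a ∈ L` with `aⁿ ∈ K` and
`v(a) = γ`. -/
theorem stmt_9 {L Γ : Type*} [Field L] [CharZero L] [AddCommGroup Γ] [LinearOrder Γ] [IsOrderedAddMonoid Γ]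
    (v : AddValuation L (WithTop Γ)) (K : Subfield L)
    (hres0 : ∀ n : ℕ, 0 < n → v (n : L) = 0)
    (hhens : ∀ P : Polynomial L, (∀ i, 0 ≤ v (P.coeff i)) →
      ∀ a : L, 0 ≤ v a → 0 < v (P.eval a) → v (P.derivative.eval a) = 0 →
        ∃ c : L, 0 ≤ v c ∧ P.eval c = 0 ∧ 0 < v (c - a))
    (hsameres : ∀ x : L, v x = 0 → ∃ y ∈ K, 0 < v (x - y))
    (n : ℕ) (hn : 1 ≤ n) (c : L) (hc : c ≠ 0)
    (d : L) (hd : d ∈ K) (hd0 : d ≠ 0) (hγ : v (c ^ n) = v d) :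
    ∃ a : L, a ^ n ∈ K ∧ v a = v c := by
  have hvd : v d ≠ ⊤ := v.ne_top_iff.mpr hd0
  set u : L := c ^ n / d with hu
  have hvu : v u = 0 := by
    rw [hu, v.map_div, hγ, wt_sub_self _ hvd]
  obtain ⟨y, hyK, hy⟩ := hsameres u hvu
  have hvy : v y = 0 := by
    have h' : v u < v (y - u) := by
      rw [v.map_sub_swap, hvu]; exact hy
    rw [v.map_eq_of_lt_sub h', hvu]
  have hy0 : y ≠ 0 := v.ne_top_iff.mp (by rw [hvy]; exact WithTop.zero_ne_top)
  set w : L := u / y with hw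
  have hvw : v w = 0 := by
    rw [hw, v.map_div, hvu, hvy, wt_sub_self _ WithTop.zero_ne_top]
  have hcoeff : ∀ i, 0 ≤ v ((Polynomial.X ^ n - Polynomial.C w).coeff i) := by
    intro i
    rw [Polynomial.coeff_sub, Polynomial.coeff_X_pow, Polynomial.coeff_C]
    rcases eq_or_ne i n with h1 | h1 <;> rcases eq_or_ne i 0 with h2 | h2
    · exfalso; omega
    · subst h1; rw [if_pos rfl, if_neg h2, sub_zero, v.map_one]
    · subst h2; rw [if_neg h1, if_pos rfl, zero_sub, v.map_neg, hvw]
    · simp [h1, h2, le_top]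
  have h1w : 0 < v (1 - w) := by
    have heq : (1 : L) - w = (y - u) / y := by
      rw [hw]; field_simp
    rw [heq, v.map_div, hvy, v.map_sub_swap, sub_zero]
    exact hy
  have hev1 : 0 < v ((Polynomial.X ^ n - Polynomial.C w).eval 1) := by
    simpa using h1w
  have hder : v ((Polynomial.X ^ n - Polynomial.C w : Polynomial L).derivative.eval 1) = 0 := by
    simp only [Polynomial.derivative_sub, Polynomial.derivative_C, Polynomial.derivative_X_pow,
      sub_zero, Polynomial.eval_mul, Polynomial.eval_natCast, Polynomial.eval_pow,
      Polynomial.eval_X, one_pow, mul_one, Polynomial.eval_C]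
    exact hres0 n (by omega)
  obtain ⟨t, ht0, htev, ht1⟩ := hhens _ hcoeff 1 (by simp) hev1 hder
  have htn : t ^ n = w := by
    have := htev
    simpa [sub_eq_zero] using this
  have hvt : v t = 0 := by
    have h' : v 1 < v (t - 1) := by rw [v.map_one]; exact ht1
    rw [v.map_eq_of_lt_sub h', v.map_one]
  have ht0' : t ≠ 0 := v.ne_top_iff.mp (by rw [hvt]; exact WithTop.zero_ne_top)
  refine ⟨c / t, ?_, ?_⟩
  · have : (c / t) ^ n = d * y := by
      rw [div_pow, htn, hw, hu]
      field_simp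
    rw [this]
    exact K.mul_mem hd hyK
  · rw [v.map_div, hvt, sub_zero]
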